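/- Let G be a graph containing two non-adjacent vertices u, v each adjacent to every other vertex of G (N(u) = V(G)\{u,v}, N(v) = V(G)\{u,v}), and let H_l = ILAT_l(G) for l ≥ 1 with u'₁, v'₁ the anticlones of u, v at step 1. Then every vertex of H_l has an even number (0, 2, or 4) of elements of {u, v, u'₁, v'₁} in its closed neighborhood, and consequently V(H_l) \ {u, v, u'₁, v'₁} is a failed zero forcing set of H_l, so FZ(ILAT_l(G)) ≥ |V(ILAT_l(G))| − 4. -/

import Mathlib

variable {V : Type*}

/-- Zero forcing closure: vertices eventually forced starting from `S`. -/
inductive ZFClos (G : SimpleGraph V) (S : Set V) : V → Prop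
  | mem (v : V) : v ∈ S → ZFClos G S v
  | force (u v : V) : ZFClos G S u → G.Adj u v →
      (∀ w, G.Adj u w → w ≠ v → ZFClos G S w) → ZFClos G S v

/-- `S` is a zero forcing set of `G`. -/
def IsZFSet (G : SimpleGraph V) (S : Set V) : Prop := ∀ v, ZFClos G S v

/-- `S` is a failed zero forcing set of `G`. -/
def IsFailedZFSet (G : SimpleGraph V) (S : Set V) : Prop := ¬ IsZFSet G S

/-- The zero forcing number `Z(G)`. -/
noncomputable def zfNumber (G : SimpleGraph V) [Fintype V] : ℕ :=
  sInf {n | ∃ S : Finset V, S.card = n ∧ IsZFSet G ↑S}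

/-- The failed zero forcing number `FZ(G)`. -/
noncomputable def fzNumber (G : SimpleGraph V) [Fintype V] : ℕ :=
  sSup {n | ∃ S : Finset V, S.card = n ∧ IsFailedZFSet G ↑S}

/-- Loop zero forcing closure. -/
inductive LZFClos (G : SimpleGraph V) (S : Set V) : V → Prop
  | mem (v : V) : v ∈ S → LZFClos G S v
  | force (u v : V) : LZFClos G S u → G.Adj u v →
      (∀ w, G.Adj u w → w ≠ v → LZFClos G S w) → LZFClos G S v
  | loop (v : V) : (∀ w, G.Adj v w → LZFClos G S w) → LZFClos G S v

/-- One ILT step: simultaneously clone every vertex.  The clone of `b` is `Sum.inr b`,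
adjacent to the closed neighborhood of `b`; clones form an independent set. -/
def iltStep (G : SimpleGraph V) : SimpleGraph (V ⊕ V) where
  Adj x y :=
    match x, y with
    | Sum.inl a, Sum.inl b => G.Adj a b
    | Sum.inl a, Sum.inr b => a = b ∨ G.Adj a b
    | Sum.inr a, Sum.inl b => b = a ∨ G.Adj b a
    | Sum.inr _, Sum.inr _ => False
  symm := by
    constructor
    rintro (a | a) (b | b) h
    · exact G.adj_symm h
    · exact h
    · exact h
    · exact h.elim
  loopless := by
    constructor
    rintro (a | a) h
    · exact G.ne_of_adj h rfl
    · exact h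

/-- One ILAT step: simultaneously anticlone every vertex.  The anticlone of `b` is
`Sum.inr b`, adjacent to the complement of the closed neighborhood of `b`. -/
def ilatStep (G : SimpleGraph V) : SimpleGraph (V ⊕ V) where
  Adj x y :=
    match x, y with
    | Sum.inl a, Sum.inl b => G.Adj a b
    | Sum.inl a, Sum.inr b => a ≠ b ∧ ¬ G.Adj a b
    | Sum.inr a, Sum.inl b => b ≠ a ∧ ¬ G.Adj b a
    | Sum.inr _, Sum.inr _ => False
  symm := by
    constructor
    rintro (a | a) (b | b) h
    · exact G.adj_symm h
    · exact h
    · exact h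
    · exact h.elim
  loopless := by
    constructor
    rintro (a | a) h
    · exact G.ne_of_adj h rfl
    · exact h

/-- One IIM step: each vertex `b` is cloned if `c b = true` and anticloned otherwise. -/
def iimStep (G : SimpleGraph V) (c : V → Bool) : SimpleGraph (V ⊕ V) where
  Adj x y :=
    match x, y with
    | Sum.inl a, Sum.inl b => G.Adj a b
    | Sum.inl a, Sum.inr b => if c b then a = b ∨ G.Adj a b else a ≠ b ∧ ¬ G.Adj a b
    | Sum.inr a, Sum.inl b => if c a then b = a ∨ G.Adj b a else b ≠ a ∧ ¬ G.Adj b a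
    | Sum.inr _, Sum.inr _ => False
  symm := by
    constructor
    rintro (a | a) (b | b) h
    · exact G.adj_symm h
    · exact h
    · exact h
    · exact h.elim
  loopless := by
    constructor
    rintro (a | a) h
    · exact G.ne_of_adj h rfl
    · exact h

/-- Adding a single clone of the vertex `v` (the new vertex is `none`). -/
def cloneOne (G : SimpleGraph V) (v : V) : SimpleGraph (Option V) where
  Adj x y :=
    match x, y with
    | some a, some b => G.Adj a b
    | some a, none => a = v ∨ G.Adj a v
    | none, some b => b = v ∨ G.Adj b v
    | none, none => False
  symm := by
    constructor
    rintro (_ | a) (_ | b) h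
    · exact h.elim
    · exact h
    · exact h
    · exact G.adj_symm h
  loopless := by
    constructor
    rintro (_ | a) h
    · exact h
    · exact G.ne_of_adj h rfl

/-- The vertex type after `l` doubling steps. -/
def IterV (V : Type*) : ℕ → Type _
  | 0 => V
  | l + 1 => IterV V l ⊕ IterV V l

instance iterVFintype [Fintype V] : ∀ l, Fintype (IterV V l)
  | 0 => ‹Fintype V›
  | l + 1 =>
    haveI : Fintype (IterV V l) := iterVFintype l
    inferInstanceAs (Fintype (IterV V l ⊕ IterV V l))

/-- `ILT_l(G)`. -/
def iltIter (G : SimpleGraph V) : ∀ l, SimpleGraph (IterV V l)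
  | 0 => G
  | l + 1 => iltStep (iltIter G l)

/-- `ILAT_l(G)`. -/
def ilatIter (G : SimpleGraph V) : ∀ l, SimpleGraph (IterV V l)
  | 0 => G
  | l + 1 => ilatStep (ilatIter G l)

/-- Iterated Independent Model: at step `n+1`, vertex `b` of the current graph is cloned
if `c n b = true` and anticloned otherwise. -/
def iimIter (G : SimpleGraph V) (c : ∀ n, IterV V n → Bool) : ∀ l, SimpleGraph (IterV V l)
  | 0 => G
  | l + 1 => iimStep (iimIter G c l) (c l)

/-- The level (time step of creation) of a vertex; level 0 is the base graph. -/
def iterLevel : ∀ {l}, IterV V l → ℕ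
  | 0, _ => 0
  | _ + 1, Sum.inl x => iterLevel x
  | l + 1, Sum.inr _ => l + 1

/-- The unique ancestor in the base graph of a vertex of an iterated graph. -/
def iterProj : ∀ {l}, IterV V l → V
  | 0, v => v
  | _ + 1, Sum.inl x => iterProj x
  | _ + 1, Sum.inr x => iterProj x

/-- The copy of a base vertex `v` (level 0) inside `IterV V l`. -/
def iterInj0 : ∀ l, V → IterV V l
  | 0, v => v
  | l + 1, v => Sum.inl (iterInj0 l v)

/-- The level-1 clone/anticlone of a base vertex `v`, viewed inside `IterV V (l+1)`. -/
def iterInj1 : ∀ l, V → IterV V (l + 1)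
  | 0, v => Sum.inr v
  | l + 1, v => Sum.inl (iterInj1 l v)

/-- The set of burned vertices after `t` burning steps, with sources `s 0, s 1, …`:
at each step the fire spreads to all neighbors of burned vertices and a new source burns. -/
def burnSet (G : SimpleGraph V) (s : ℕ → V) : ℕ → Set V
  | 0 => ∅
  | t + 1 => insert (s t) (burnSet G s t ∪ {v | ∃ u ∈ burnSet G s t, G.Adj u v})

/-- `G` can be fully burned in `k` steps. -/
def BurnsIn (G : SimpleGraph V) (k : ℕ) : Prop :=
  ∃ s : ℕ → V, burnSet G s k = Set.univ

/-- `G` can be fully burned in `k` steps with the final source superfluous: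
the fire spread alone covers everything at step `k`. -/
def BurnsInStar (G : SimpleGraph V) (k : ℕ) : Prop :=
  ∃ s : ℕ → V,
    (burnSet G s (k - 1) ∪ {v | ∃ u ∈ burnSet G s (k - 1), G.Adj u v}) = Set.univ

/-- The burning number `b(G)`. -/
noncomputable def burningNumber (G : SimpleGraph V) : ℕ := sInf {k | BurnsIn G k}

/-- The burning number `b*(G)` with superfluous final source. -/
noncomputable def burningNumberStar (G : SimpleGraph V) : ℕ := sInf {k | BurnsInStar G k}

section Aux18

open Classical in
/-- Classical indicator of a proposition. -/
noncomputable def aindic (p : Prop) : ℕ := if p then 1 else 0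

lemma aindic_pos {p : Prop} (h : p) : aindic p = 1 := by simp [aindic, h]

lemma aindic_neg {p : Prop} (h : ¬ p) : aindic p = 0 := by simp [aindic, h]

lemma aindic_congr {p q : Prop} (h : p ↔ q) : aindic p = aindic q := by
  by_cases hp : p
  · rw [aindic_pos hp, aindic_pos (h.mp hp)]
  · rw [aindic_neg hp, aindic_neg (fun hq => hp (h.mpr hq))]

lemma aindic_not_add {p : Prop} : aindic (¬ p) + aindic p = 1 := by
  by_cases hp : p <;> simp [aindic_pos, aindic_neg, hp, not_not]

lemma ncard_inter_four {α : Type*} (N : Set α) (w1 w2 w3 w4 : α)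
    (h12 : w1 ≠ w2) (h13 : w1 ≠ w3) (h14 : w1 ≠ w4)
    (h23 : w2 ≠ w3) (h24 : w2 ≠ w4) (h34 : w3 ≠ w4) :
    (N ∩ {w1, w2, w3, w4}).ncard =
      aindic (w1 ∈ N) + aindic (w2 ∈ N) + aindic (w3 ∈ N) + aindic (w4 ∈ N) := by
  classical
  have hset : N ∩ {w1, w2, w3, w4} =
      ↑((({w1, w2, w3, w4} : Finset α)).filter (· ∈ N)) := by
    ext x
    simp only [Set.mem_inter_iff, Finset.coe_filter, Set.mem_setOf_eq,
      Finset.mem_insert, Finset.mem_singleton, Set.mem_insert_iff,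
      Set.mem_singleton_iff]
    tauto
  rw [hset, Set.ncard_coe_finset, Finset.card_filter]
  rw [show ({w1, w2, w3, w4} : Finset α) =
      insert w1 (insert w2 (insert w3 ({w4} : Finset α))) from rfl]
  rw [Finset.sum_insert (by simp [h12, h13, h14]),
    Finset.sum_insert (by simp [h23, h24]),
    Finset.sum_insert (by simp [h34]), Finset.sum_singleton]
  by_cases k1 : w1 ∈ N <;> by_cases k2 : w2 ∈ N <;>
    by_cases k3 : w3 ∈ N <;> by_cases k4 : w4 ∈ N <;>
    simp [aindic, k1, k2, k3, k4]

lemma mem_cn_iff {α : Type*} (G : SimpleGraph α) (a w : α) :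
    w ∈ insert a (G.neighborSet a) ↔ w = a ∨ G.Adj a w := by
  simp [SimpleGraph.mem_neighborSet]

lemma iterInj0_injective : ∀ (l : ℕ), Function.Injective (iterInj0 (V := V) l)
  | 0 => fun _ _ h => h
  | l + 1 => fun _ _ h => iterInj0_injective l (Sum.inl.inj h)

lemma iterInj1_injective : ∀ (l : ℕ), Function.Injective (iterInj1 (V := V) l)
  | 0 => fun _ _ h => Sum.inr.inj h
  | l + 1 => fun _ _ h => iterInj1_injective l (Sum.inl.inj h)

lemma iterInj0_ne_iterInj1 : ∀ (l : ℕ) (a b : V), iterInj0 (l + 1) a ≠ iterInj1 l b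
  | 0, _, _ => fun h => Sum.inl_ne_inr h
  | l + 1, a, b => fun h => iterInj0_ne_iterInj1 l a b (Sum.inl.inj h)

/-- In a graph where every vertex has `≠ 1` members of `S` in its closed neighborhood,
no vertex of `S` is ever forced starting from the complement of `S`. -/
lemma closure_not_mem {α : Type*} (G : SimpleGraph α) (S : Set α)
    (hfin : ∀ a : α, ((insert a (G.neighborSet a)) ∩ S).Finite)
    (h : ∀ a : α, ((insert a (G.neighborSet a)) ∩ S).ncard ≠ 1) :
    ∀ w, ZFClos G (Set.univ \ S) w → w ∉ S := by
  intro w hw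
  induction hw with
  | mem x hx => exact hx.2
  | force a b ha hab hnb iha ihnb =>
    intro hbS
    have hsub : (insert a (G.neighborSet a)) ∩ S ⊆ {b} := by
      rintro x ⟨hx, hxS⟩
      rcases Set.mem_insert_iff.mp hx with rfl | hx
      · exact absurd hxS iha
      · by_contra hne'
        exact ihnb x hx (by simpa using hne') hxS
    have hle : ((insert a (G.neighborSet a)) ∩ S).ncard ≤ 1 := by
      simpa using Set.ncard_le_ncard hsub (Set.finite_singleton b)
    have hpos : 0 < ((insert a (G.neighborSet a)) ∩ S).ncard := by
      rw [Set.ncard_pos (hfin a)]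
      exact ⟨b, Set.mem_insert_iff.mpr (Or.inr hab), hbS⟩
    exact h a (by omega)

/-- Key invariant: every vertex of `ILAT_{l+1}(G)` has an even number of the four special
vertices in its closed neighborhood. -/
lemma key18 (G : SimpleGraph V) (u v : V) (hne : u ≠ v)
    (hu : G.neighborSet u = Set.univ \ {u, v})
    (hv : G.neighborSet v = Set.univ \ {u, v}) :
    ∀ (l : ℕ) (a : IterV V (l + 1)),
      aindic (iterInj0 (l + 1) u ∈ insert a ((ilatIter G (l + 1)).neighborSet a)) +
      aindic (iterInj0 (l + 1) v ∈ insert a ((ilatIter G (l + 1)).neighborSet a)) +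
      aindic (iterInj1 l u ∈ insert a ((ilatIter G (l + 1)).neighborSet a)) +
      aindic (iterInj1 l v ∈ insert a ((ilatIter G (l + 1)).neighborSet a)) = 0 ∨
      aindic (iterInj0 (l + 1) u ∈ insert a ((ilatIter G (l + 1)).neighborSet a)) +
      aindic (iterInj0 (l + 1) v ∈ insert a ((ilatIter G (l + 1)).neighborSet a)) +
      aindic (iterInj1 l u ∈ insert a ((ilatIter G (l + 1)).neighborSet a)) +
      aindic (iterInj1 l v ∈ insert a ((ilatIter G (l + 1)).neighborSet a)) = 2 ∨
      aindic (iterInj0 (l + 1) u ∈ insert a ((ilatIter G (l + 1)).neighborSet a)) +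
      aindic (iterInj0 (l + 1) v ∈ insert a ((ilatIter G (l + 1)).neighborSet a)) +
      aindic (iterInj1 l u ∈ insert a ((ilatIter G (l + 1)).neighborSet a)) +
      aindic (iterInj1 l v ∈ insert a ((ilatIter G (l + 1)).neighborSet a)) = 4 := by
  have hAu : ∀ a : V, G.Adj a u ↔ a ≠ u ∧ a ≠ v := by
    intro a
    rw [G.adj_comm, ← SimpleGraph.mem_neighborSet, hu]
    simp [Set.mem_diff]
  have hAv : ∀ a : V, G.Adj a v ↔ a ≠ u ∧ a ≠ v := by
    intro a
    rw [G.adj_comm, ← SimpleGraph.mem_neighborSet, hv]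
    simp [Set.mem_diff]
  have hAu' : ∀ a : V, G.Adj u a ↔ a ≠ u ∧ a ≠ v := by
    intro a; rw [G.adj_comm]; exact hAu a
  have hAv' : ∀ a : V, G.Adj v a ↔ a ≠ u ∧ a ≠ v := by
    intro a; rw [G.adj_comm]; exact hAv a
  intro l
  induction l with
  | zero =>
    intro a
    rcases a with b | b
    · have m1 : ∀ x : V,
          (iterInj0 (0 + 1) x ∈
            insert (α := IterV V (0 + 1)) (Sum.inl b) ((ilatIter G (0 + 1)).neighborSet (Sum.inl b))) ↔
          (x = b ∨ G.Adj b x) := by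
        intro x
        refine (mem_cn_iff _ _ _).trans ?_
        exact or_congr ⟨fun h => Sum.inl.inj h, fun h => congrArg Sum.inl h⟩ Iff.rfl
      have m3 : ∀ x : V,
          (iterInj1 0 x ∈
            insert (α := IterV V (0 + 1)) (Sum.inl b) ((ilatIter G (0 + 1)).neighborSet (Sum.inl b))) ↔
          (@Ne V b x ∧ ¬ G.Adj b x) := by
        intro x
        refine (mem_cn_iff _ _ _).trans ?_
        exact ⟨fun h => h.elim (fun h => (Sum.inr_ne_inl h).elim) id, Or.inr⟩
      rw [aindic_congr (m1 u), aindic_congr (m1 v), aindic_congr (m3 u),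
        aindic_congr (m3 v)]
      change V at b
      rcases eq_or_ne (b : V) u with rfl | hbu
      · simp [aindic, hAu, hAv, hne, hne.symm]
      · rcases eq_or_ne (b : V) v with rfl | hbv
        · simp [aindic, hAu, hAv, hne, hne.symm]
        · simp [aindic, hAu, hAv, hne, hne.symm, hbu, hbv, hbu.symm, hbv.symm]
    · have m1 : ∀ x : V,
          (iterInj0 (0 + 1) x ∈
            insert (α := IterV V (0 + 1)) (Sum.inr b) ((ilatIter G (0 + 1)).neighborSet (Sum.inr b))) ↔
          (@Ne V x b ∧ ¬ G.Adj x b) := by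
        intro x
        refine (mem_cn_iff _ _ _).trans ?_
        exact ⟨fun h => h.elim (fun h => (Sum.inl_ne_inr h).elim) id, Or.inr⟩
      have m3 : ∀ x : V,
          (iterInj1 0 x ∈
            insert (α := IterV V (0 + 1)) (Sum.inr b) ((ilatIter G (0 + 1)).neighborSet (Sum.inr b))) ↔
          (@Eq V x b) := by
        intro x
        refine (mem_cn_iff _ _ _).trans ?_
        exact ⟨fun h => h.elim (fun h => Sum.inr.inj h) False.elim,
          fun h => Or.inl (congrArg Sum.inr h)⟩
      rw [aindic_congr (m1 u), aindic_congr (m1 v), aindic_congr (m3 u),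
        aindic_congr (m3 v)]
      change V at b
      rcases eq_or_ne (b : V) u with rfl | hbu
      · simp [aindic, hAu, hAv, hAu', hAv', hne, hne.symm]
      · rcases eq_or_ne (b : V) v with rfl | hbv
        · simp [aindic, hAu, hAv, hAu', hAv', hne, hne.symm]
        · simp [aindic, hAu, hAv, hAu', hAv', hne, hne.symm, hbu, hbv, hbu.symm,
            hbv.symm]
  | succ l ih =>
    intro a
    rcases a with b | b
    · have e : ∀ w : IterV V (l + 1),
          ((Sum.inl w : IterV V (l + 1 + 1)) ∈
            insert (α := IterV V (l + 1 + 1)) (Sum.inl b) ((ilatIter G (l + 1 + 1)).neighborSet (Sum.inl b))) ↔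
          (w ∈ insert b ((ilatIter G (l + 1)).neighborSet b)) := by
        intro w
        refine (mem_cn_iff _ _ _).trans ?_
        rw [mem_cn_iff]
        exact or_congr ⟨fun h => Sum.inl.inj h, fun h => congrArg Sum.inl h⟩ Iff.rfl
      have e1 : (iterInj0 (l + 1 + 1) u ∈
          insert (α := IterV V (l + 1 + 1)) (Sum.inl b) ((ilatIter G (l + 1 + 1)).neighborSet (Sum.inl b))) ↔
          (iterInj0 (l + 1) u ∈ insert b ((ilatIter G (l + 1)).neighborSet b)) :=
        e (iterInj0 (l + 1) u)
      have e2 : (iterInj0 (l + 1 + 1) v ∈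
          insert (α := IterV V (l + 1 + 1)) (Sum.inl b) ((ilatIter G (l + 1 + 1)).neighborSet (Sum.inl b))) ↔
          (iterInj0 (l + 1) v ∈ insert b ((ilatIter G (l + 1)).neighborSet b)) :=
        e (iterInj0 (l + 1) v)
      have e3 : (iterInj1 (l + 1) u ∈
          insert (α := IterV V (l + 1 + 1)) (Sum.inl b) ((ilatIter G (l + 1 + 1)).neighborSet (Sum.inl b))) ↔
          (iterInj1 l u ∈ insert b ((ilatIter G (l + 1)).neighborSet b)) :=
        e (iterInj1 l u)
      have e4 : (iterInj1 (l + 1) v ∈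
          insert (α := IterV V (l + 1 + 1)) (Sum.inl b) ((ilatIter G (l + 1 + 1)).neighborSet (Sum.inl b))) ↔
          (iterInj1 l v ∈ insert b ((ilatIter G (l + 1)).neighborSet b)) :=
        e (iterInj1 l v)
      rw [aindic_congr e1, aindic_congr e2, aindic_congr e3, aindic_congr e4]
      exact ih b
    · have e : ∀ w : IterV V (l + 1),
          ((Sum.inl w : IterV V (l + 1 + 1)) ∈
            insert (α := IterV V (l + 1 + 1)) (Sum.inr b) ((ilatIter G (l + 1 + 1)).neighborSet (Sum.inr b))) ↔
          ¬ (w ∈ insert b ((ilatIter G (l + 1)).neighborSet b)) := by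
        intro w
        refine (mem_cn_iff _ _ _).trans ?_
        rw [mem_cn_iff]
        constructor
        · rintro (h | h)
          · exact (Sum.inl_ne_inr h).elim
          · obtain ⟨h1, h2⟩ := (h : w ≠ b ∧ ¬ (ilatIter G (l + 1)).Adj w b)
            rintro (rfl | hadj)
            · exact h1 rfl
            · exact h2 hadj.symm
        · intro h
          push_neg at h
          exact Or.inr
            (⟨h.1, fun hh => h.2 hh.symm⟩ : w ≠ b ∧ ¬ (ilatIter G (l + 1)).Adj w b)
      have e1 : (iterInj0 (l + 1 + 1) u ∈
          insert (α := IterV V (l + 1 + 1)) (Sum.inr b) ((ilatIter G (l + 1 + 1)).neighborSet (Sum.inr b))) ↔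
          ¬ (iterInj0 (l + 1) u ∈ insert b ((ilatIter G (l + 1)).neighborSet b)) :=
        e (iterInj0 (l + 1) u)
      have e2 : (iterInj0 (l + 1 + 1) v ∈
          insert (α := IterV V (l + 1 + 1)) (Sum.inr b) ((ilatIter G (l + 1 + 1)).neighborSet (Sum.inr b))) ↔
          ¬ (iterInj0 (l + 1) v ∈ insert b ((ilatIter G (l + 1)).neighborSet b)) :=
        e (iterInj0 (l + 1) v)
      have e3 : (iterInj1 (l + 1) u ∈
          insert (α := IterV V (l + 1 + 1)) (Sum.inr b) ((ilatIter G (l + 1 + 1)).neighborSet (Sum.inr b))) ↔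
          ¬ (iterInj1 l u ∈ insert b ((ilatIter G (l + 1)).neighborSet b)) :=
        e (iterInj1 l u)
      have e4 : (iterInj1 (l + 1) v ∈
          insert (α := IterV V (l + 1 + 1)) (Sum.inr b) ((ilatIter G (l + 1 + 1)).neighborSet (Sum.inr b))) ↔
          ¬ (iterInj1 l v ∈ insert b ((ilatIter G (l + 1)).neighborSet b)) :=
        e (iterInj1 l v)
      rw [aindic_congr e1, aindic_congr e2, aindic_congr e3, aindic_congr e4]
      have h1 := aindic_not_add
        (p := iterInj0 (l + 1) u ∈ insert b ((ilatIter G (l + 1)).neighborSet b))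
      have h2 := aindic_not_add
        (p := iterInj0 (l + 1) v ∈ insert b ((ilatIter G (l + 1)).neighborSet b))
      have h3 := aindic_not_add
        (p := iterInj1 l u ∈ insert b ((ilatIter G (l + 1)).neighborSet b))
      have h4 := aindic_not_add
        (p := iterInj1 l v ∈ insert b ((ilatIter G (l + 1)).neighborSet b))
      rcases ih b with h | h | h <;> omega

end Aux18

/-- for `G` with two non-adjacent mutually dominating vertices `u, v`,
every vertex of `ILAT_l(G)` (`l ≥ 1`) has 0, 2 or 4 of `{u, v, u'₁, v'₁}` in its closed
neighborhood; hence their complement is a failed zero forcing set and `FZ ≥ |V| - 4`. -/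
theorem stmt18 [Fintype V] (G : SimpleGraph V) (u v : V) (hne : u ≠ v)
    (hu : G.neighborSet u = Set.univ \ {u, v})
    (hv : G.neighborSet v = Set.univ \ {u, v}) (l : ℕ) :
    (∀ a : IterV V (l + 1),
        ((insert a ((ilatIter G (l + 1)).neighborSet a)) ∩
          ({iterInj0 (l + 1) u, iterInj0 (l + 1) v, iterInj1 l u, iterInj1 l v} :
            Set (IterV V (l + 1)))).ncard = 0 ∨
        ((insert a ((ilatIter G (l + 1)).neighborSet a)) ∩
          ({iterInj0 (l + 1) u, iterInj0 (l + 1) v, iterInj1 l u, iterInj1 l v} :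
            Set (IterV V (l + 1)))).ncard = 2 ∨
        ((insert a ((ilatIter G (l + 1)).neighborSet a)) ∩
          ({iterInj0 (l + 1) u, iterInj0 (l + 1) v, iterInj1 l u, iterInj1 l v} :
            Set (IterV V (l + 1)))).ncard = 4) ∧
    IsFailedZFSet (ilatIter G (l + 1))
      (Set.univ \
        ({iterInj0 (l + 1) u, iterInj0 (l + 1) v, iterInj1 l u, iterInj1 l v} :
          Set (IterV V (l + 1)))) ∧
    Fintype.card (IterV V (l + 1)) - 4 ≤ fzNumber (ilatIter G (l + 1)) := by
  classical
  set w1 := iterInj0 (l + 1) u with hw1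
  set w2 := iterInj0 (l + 1) v with hw2
  set w3 := iterInj1 l u with hw3
  set w4 := iterInj1 l v with hw4
  have d12 : w1 ≠ w2 := fun h => hne (iterInj0_injective _ h)
  have d13 : w1 ≠ w3 := iterInj0_ne_iterInj1 l u u
  have d14 : w1 ≠ w4 := iterInj0_ne_iterInj1 l u v
  have d23 : w2 ≠ w3 := iterInj0_ne_iterInj1 l v u
  have d24 : w2 ≠ w4 := iterInj0_ne_iterInj1 l v v
  have d34 : w3 ≠ w4 := fun h => hne (iterInj1_injective _ h)
  have hkey := key18 G u v hne hu hv l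
  have hcnt : ∀ a : IterV V (l + 1),
      ((insert a ((ilatIter G (l + 1)).neighborSet a)) ∩
        ({w1, w2, w3, w4} : Set (IterV V (l + 1)))).ncard = 0 ∨
      ((insert a ((ilatIter G (l + 1)).neighborSet a)) ∩
        ({w1, w2, w3, w4} : Set (IterV V (l + 1)))).ncard = 2 ∨
      ((insert a ((ilatIter G (l + 1)).neighborSet a)) ∩
        ({w1, w2, w3, w4} : Set (IterV V (l + 1)))).ncard = 4 := by
    intro a
    rw [ncard_inter_four _ w1 w2 w3 w4 d12 d13 d14 d23 d24 d34]
    exact hkey a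
  have hfailed : IsFailedZFSet (ilatIter G (l + 1))
      (Set.univ \ ({w1, w2, w3, w4} : Set (IterV V (l + 1)))) := by
    intro hZF
    have hnm := closure_not_mem (ilatIter G (l + 1))
      ({w1, w2, w3, w4} : Set (IterV V (l + 1)))
      (fun a => Set.toFinite _)
      (fun a => by rcases hcnt a with h | h | h <;> omega)
    exact hnm w1 (hZF w1) (Set.mem_insert _ _)
  refine ⟨hcnt, hfailed, ?_⟩
  have hF : (({w1, w2, w3, w4} : Finset (IterV V (l + 1))) : Set (IterV V (l + 1))) =
      ({w1, w2, w3, w4} : Set (IterV V (l + 1))) := by simp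
  have hcard4 : ({w1, w2, w3, w4} : Finset (IterV V (l + 1))).card = 4 := by
    rw [Finset.card_insert_of_notMem (by simp [d12, d13, d14]),
      Finset.card_insert_of_notMem (by simp [d23, d24]),
      Finset.card_insert_of_notMem (by simp [d34]), Finset.card_singleton]
  refine le_csSup ⟨Fintype.card (IterV V (l + 1)), ?_⟩ ?_
  · rintro n ⟨S, hS, -⟩
    exact hS ▸ Finset.card_le_univ S
  · refine ⟨Finset.univ \ ({w1, w2, w3, w4} : Finset (IterV V (l + 1))), ?_, ?_⟩
    · rw [Finset.card_sdiff_of_subset (Finset.subset_univ _), hcard4, Finset.card_univ]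
    · have : ((Finset.univ \ ({w1, w2, w3, w4} : Finset (IterV V (l + 1))) :
          Finset (IterV V (l + 1))) : Set (IterV V (l + 1))) =
          Set.univ \ ({w1, w2, w3, w4} : Set (IterV V (l + 1))) := by
        rw [Finset.coe_sdiff, Finset.coe_univ, hF]
      rw [this]
      exact hfailed
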